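/- Let F be a unit vector in Im 𝕆, and let α, β lie in the (1,0)-space T_F^{1,0} = {v ∈ F^⊥ ⊗ ℂ : F × v = i v}. Then α × β̄ = i (α, β̄) F. -/
import Mathlib


open scoped ComplexConjugate

/-- The standard complex-bilinear symmetric form on `ℂⁿ`. -/
noncomputable def Bform {n : ℕ} (u v : Fin n → ℂ) : ℂ := ∑ i, u i * v i

/-- Componentwise complex conjugation on `ℂⁿ`. -/
noncomputable def conjn {n : ℕ} (v : Fin n → ℂ) : Fin n → ℂ := fun i => conj (v i)

lemma Bform_comm {n : ℕ} (u v : Fin n → ℂ) : Bform u v = Bform v u := by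
  simp [Bform, mul_comm]

lemma Bform_neg_right {n : ℕ} (u v : Fin n → ℂ) : Bform u (-v) = - Bform u v := by
  simp [Bform, Finset.sum_neg_distrib]

lemma Bform_conj {n : ℕ} (u v : Fin n → ℂ) :
    Bform (conjn u) (conjn v) = conj (Bform u v) := by
  simp [Bform, conjn, map_sum]

lemma conjn_add {n : ℕ} (u v : Fin n → ℂ) : conjn (u + v) = conjn u + conjn v := by
  funext i; simp [conjn]

lemma conjn_smul {n : ℕ} (c : ℂ) (v : Fin n → ℂ) :
    conjn (c • v) = (conj c) • conjn v := by
  funext i; simp [conjn]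

/-- cross of a real vector with itself vanishes. -/
lemma cross_self_real
    (cross : (Fin 7 → ℂ) →ₗ[ℂ] (Fin 7 → ℂ) →ₗ[ℂ] (Fin 7 → ℂ))
    (h1 : ∀ u v w, Bform u (cross v w) = Bform (cross u v) w)
    (h2 : ∀ u v w : Fin 7 → ℂ, cross u (cross v w) + cross (cross u v) w
        = (2 * Bform u w) • v - Bform u v • w - Bform v w • u)
    (hconj : ∀ u v, conjn (cross u v) = cross (conjn u) (conjn v))
    (a : Fin 7 → ℂ) (ha : conjn a = a) : cross a a = 0 := by
  set s : Fin 7 → ℂ := cross a a with hs_def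
  have hsreal : conjn s = s := by rw [hs_def, hconj, ha]
  -- cross a s = - cross s a
  have h0 : cross a s + cross s a = 0 := by
    have := h2 a a a
    rw [← hs_def] at this
    rw [this]
    module
  have hanti : cross a s = - cross s a := by
    have := h0
    linear_combination (norm := module) this
  -- B s s = 0
  have ht : Bform a (cross a s) = Bform s s := by
    rw [h1 a a s, ← hs_def]
  have ht2 : Bform a (cross a s) = - Bform a (cross a s) := by
    calc Bform a (cross a s) = Bform a (- cross s a) := by rw [hanti]
      _ = - Bform a (cross s a) := Bform_neg_right a _
      _ = - Bform (cross a s) a := by rw [h1 a s a]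
      _ = - Bform a (cross a s) := by rw [Bform_comm]
  have hBss : Bform s s = 0 := by
    have : Bform a (cross a s) = 0 := by linear_combination ht2 / 2
    rw [← ht, this]
  -- real entries
  have him : ∀ i, (s i).im = 0 := by
    intro i
    have : conj (s i) = s i := congrFun hsreal i
    exact Complex.conj_eq_iff_im.mp this
  have hre : ∀ i, (s i).re = 0 := by
    have hsum : ∑ i, ((s i).re)^2 = 0 := by
      have := congrArg Complex.re hBss
      simpa [Bform, Complex.mul_re, him, pow_two] using this
    intro i
    have h1' := (Finset.sum_eq_zero_iff_of_nonneg (fun i _ => sq_nonneg ((s i).re))).mp hsum i (Finset.mem_univ i)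
    exact (pow_eq_zero_iff two_ne_zero).mp h1'
  funext i
  exact Complex.ext (hre i) (him i)


/-- The cross product is antisymmetric. -/
lemma cross_antisymm
    (cross : (Fin 7 → ℂ) →ₗ[ℂ] (Fin 7 → ℂ) →ₗ[ℂ] (Fin 7 → ℂ))
    (h1 : ∀ u v w, Bform u (cross v w) = Bform (cross u v) w)
    (h2 : ∀ u v w : Fin 7 → ℂ, cross u (cross v w) + cross (cross u v) w
        = (2 * Bform u w) • v - Bform u v • w - Bform v w • u)
    (hconj : ∀ u v, conjn (cross u v) = cross (conjn u) (conjn v))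
    (u v : Fin 7 → ℂ) : cross u v = - cross v u := by
  set e : Fin 7 → (Fin 7 → ℂ) := fun i => Pi.single i 1 with he
  have hereal : ∀ i, conjn (e i) = e i := by
    intro i; funext j
    simp only [conjn, he, Pi.single_apply]
    split <;> simp
  have hself : ∀ a, conjn a = a → cross a a = 0 :=
    fun a ha => cross_self_real cross h1 h2 hconj a ha
  have hkey : ∀ i j, cross (e i) (e j) = - cross (e j) (e i) := by
    intro i j
    have hsum : cross (e i + e j) (e i + e j) = 0 := by
      apply hself
      rw [conjn_add, hereal, hereal]
    have hii : cross (e i) (e i) = 0 := hself _ (hereal i)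
    have hjj : cross (e j) (e j) = 0 := hself _ (hereal j)
    simp only [map_add, LinearMap.add_apply, hii, hjj] at hsum
    linear_combination (norm := module) hsum
  have hdecomp : ∀ w : Fin 7 → ℂ, w = ∑ i, w i • e i := by
    intro w; funext j
    simp [he, Finset.sum_apply, Pi.single_apply]
  have expand : ∀ a b : Fin 7 → ℂ,
      cross a b = ∑ i, ∑ j, (a i * b j) • cross (e i) (e j) := by
    intro a b
    conv_lhs => rw [hdecomp a, hdecomp b]
    simp only [map_sum, map_smul, LinearMap.sum_apply, LinearMap.smul_apply,
      Finset.smul_sum, smul_smul]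
    rw [Finset.sum_comm]
    exact Finset.sum_congr rfl fun i _ => Finset.sum_congr rfl fun j _ => by
      rw [mul_comm]
  rw [expand u v, expand v u, ← Finset.sum_neg_distrib, Finset.sum_comm]
  refine Finset.sum_congr rfl (fun j _ => ?_)
  rw [← Finset.sum_neg_distrib]
  refine Finset.sum_congr rfl (fun i _ => ?_)
  rw [hkey i j, mul_comm]
  module

/-- For F a real unit vector and α, β in the (1,0)-space
T_F^{1,0} = {v ⊥ F : F × v = iv}, one has α × β̄ = i (α, β̄) F. -/
theorem cross_alpha_conj_beta
    (cross : (Fin 7 → ℂ) →ₗ[ℂ] (Fin 7 → ℂ) →ₗ[ℂ] (Fin 7 → ℂ))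
    (h1 : ∀ u v w, Bform u (cross v w) = Bform (cross u v) w)
    (h2 : ∀ u v w : Fin 7 → ℂ, cross u (cross v w) + cross (cross u v) w
        = (2 * Bform u w) • v - Bform u v • w - Bform v w • u)
    (hconj : ∀ u v, conjn (cross u v) = cross (conjn u) (conjn v))
    (F : Fin 7 → ℂ) (hFreal : conjn F = F) (hFunit : Bform F F = 1)
    (α β : Fin 7 → ℂ)
    (hαperp : Bform F α = 0) (hα : cross F α = Complex.I • α)
    (hβperp : Bform F β = 0) (hβ : cross F β = Complex.I • β) :
    cross α (conjn β) = (Complex.I * Bform α (conjn β)) • F := by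
  set β' : Fin 7 → ℂ := conjn β with hβ'def
  -- conjugated eigenvector equation
  have hβ'eig : cross F β' = (-Complex.I) • β' := by
    have h := congrArg conjn hβ
    rw [hconj, hFreal, conjn_smul] at h
    simpa [Complex.conj_I, hβ'def] using h
  have hFβ' : Bform F β' = 0 := by
    have h := Bform_conj F β
    rw [hFreal, hβperp] at h
    simpa [hβ'def] using h
  have hαF : Bform α F = 0 := by rw [Bform_comm]; exact hαperp
  have hcrossαF : cross α F = -(Complex.I • α) := by
    rw [cross_antisymm cross h1 h2 hconj α F, hα]
  have hbig := h2 α F β'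
  rw [hβ'eig, hcrossαF, hαF, hFβ'] at hbig
  simp only [map_smul, map_neg, LinearMap.neg_apply, LinearMap.smul_apply,
    zero_smul, sub_zero, neg_smul, smul_smul] at hbig
  have h6 : ((-2) * Complex.I) • cross α β' = (2 * Bform α β') • F := by
    linear_combination (norm := module) hbig
  have h7 := congrArg (fun w => Complex.I • w) h6
  simp only [smul_smul] at h7
  have hcoef : Complex.I * ((-2) * Complex.I) = 2 := by
    linear_combination (-2 : ℂ) * Complex.I_mul_I
  rw [hcoef] at h7
  linear_combination (norm := module) ((1 : ℂ)/2) • h7
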